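/- arXiv:2212.06028 — 2 statements merged into one kernel-verified Lean document; each statement's English description precedes it below -/
import Mathlib

section
/- The function H defined on (0,∞) by H(w) := ((√w + 1)/(√w − 1))·log w for w ≠ 1 and H(1) := 4 satisfies H(u) = H(1/u) for all u > 0 and is increasing on [1,∞); consequently H(u) ≤ H(r) for every r ≥ 1 and every u ∈ [1/r, r]. -/
open Finset

noncomputable section

variable {X : Type*} [Fintype X] [DecidableEq X] [Nonempty X]

/-- Dirichlet form `E(f,g) = (1/2) ∑_{x,y} π(x) Q(x,y) (f(x)-f(y))(g(x)-g(y))`. -/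
def dirichletForm (π : X → ℝ) (Q : X → X → ℝ) (f g : X → ℝ) : ℝ :=
  (1 / 2) * ∑ x : X, ∑ y : X, π x * Q x y * (f x - f y) * (g x - g y)

/-- Mean `E[f] = ∑_x π(x) f(x)`. -/
def mean (π : X → ℝ) (f : X → ℝ) : ℝ := ∑ x : X, π x * f x

/-- Entropy `Ent(f) = E[f log f] - E[f] log E[f]`. -/
def entropy (π : X → ℝ) (f : X → ℝ) : ℝ :=
  mean π (fun x => f x * Real.log (f x)) - mean π f * Real.log (mean π f)

/-- Variance `Var(f) = E[f²] - E[f]²`. -/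
def variance (π : X → ℝ) (f : X → ℝ) : ℝ :=
  mean π (fun x => f x ^ 2) - (mean π f) ^ 2

/-- Total jump rate `Q(x) = ∑_{y ≠ x} Q(x,y)`. -/
def jumpRate (Q : X → X → ℝ) (x : X) : ℝ := ∑ y ∈ univ.erase x, Q x y

/-- Sparsity parameter `p = min_{(x,y) ∈ E} Q(x,y) / max(Q(x), Q(y,x))`. -/
def sparsity (Q : X → X → ℝ) : ℝ :=
  sInf {s : ℝ | ∃ x y : X, x ≠ y ∧ 0 < Q x y ∧
    s = Q x y / max (jumpRate Q x) (Q y x)}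

/-- The transition graph `(X, E)` (symmetric since under reversibility
`Q(x,y) > 0 ↔ Q(y,x) > 0`). -/
def chainGraph (Q : X → X → ℝ) : SimpleGraph X where
  Adj x y := x ≠ y ∧ (0 < Q x y ∨ 0 < Q y x)
  symm := ⟨by intro x y h; exact ⟨h.1.symm, h.2.symm⟩⟩
  loopless := ⟨by intro x h; exact h.1 rfl⟩

/-- Graph distance on `(X, E)`. -/
def graphDist (Q : X → X → ℝ) (x y : X) : ℕ := (chainGraph Q).dist x y

/-- Regularization `f⋆(x) = max_z r^{-d(x,z)} f(z)`. -/
def fStar (Q : X → X → ℝ) (r : ℝ) (f : X → ℝ) (x : X) : ℝ :=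
  univ.sup' univ_nonempty (fun z => r ^ (-(graphDist Q x z : ℤ)) * f z)

/-- `(x,y)` is an allowed transition. -/
def IsEdge (Q : X → X → ℝ) (e : X × X) : Prop := e.1 ≠ e.2 ∧ 0 < Q e.1 e.2

/-- The edge set `E = {(x,y) : x ≠ y, Q(x,y) > 0}` as a finset. -/
def edges (Q : X → X → ℝ) : Finset (X × X) :=
  univ.filter (fun e => e.1 ≠ e.2 ∧ 0 < Q e.1 e.2)

/-- Edge weight `c(x,y) = π(x) Q(x,y)`. -/
def edgeWeight (π : X → ℝ) (Q : X → X → ℝ) (e : X × X) : ℝ := π e.1 * Q e.1 e.2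

/-- Distance between edges: `d(e,e') = ℓ - 1` where `ℓ` is the minimal length of a
path `(x_0, …, x_ℓ)` with `(x_0,x_1) = e` and `(x_{ℓ-1}, x_ℓ) = e'`. -/
def edgeDist (Q : X → X → ℝ) (e e' : X × X) : ℕ :=
  sInf {n : ℕ | ∃ c : ℕ → X, c 0 = e.1 ∧ c 1 = e.2 ∧ c n = e'.1 ∧ c (n + 1) = e'.2 ∧
    ∀ i < n + 1, (chainGraph Q).Adj (c i) (c (i + 1))}

/-- `κ = max_{e' ∈ E} (1/c(e')) ∑_{e ∈ E} c(e) r^{-d(e,e')}`. -/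
def kappa (π : X → ℝ) (Q : X → X → ℝ) (r : ℝ) : ℝ :=
  sSup {k : ℝ | ∃ e' ∈ edges Q, k = (1 / edgeWeight π Q e') *
    ∑ e ∈ edges Q, edgeWeight π Q e * r ^ (-(edgeDist Q e e' : ℤ))}

/-- `H(w) = ((√w + 1)/(√w - 1)) log w` for `w ≠ 1`, and `H(1) = 4`. -/
def Hfun (w : ℝ) : ℝ :=
  if w = 1 then 4 else ((Real.sqrt w + 1) / (Real.sqrt w - 1)) * Real.log w

/-- A function is `r`-regular if `f(x) ≤ r f(y)` across every edge. -/
def IsRRegular (Q : X → X → ℝ) (r : ℝ) (f : X → ℝ) : Prop :=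
  ∀ x y : X, x ≠ y → 0 < Q x y → f x ≤ r * f y

/-- Maximum degree of the graph `(X, E)`. -/
def maxDegree (Q : X → X → ℝ) : ℕ :=
  univ.sup (fun x : X => Nat.card {y : X // (chainGraph Q).Adj x y})

/-- Irreducibility: every state can be reached from every other through allowed
transitions. -/
def MarkovIrreducible (Q : X → X → ℝ) : Prop :=
  ∀ x y : X, Relation.ReflTransGen (fun a b => a ≠ b ∧ 0 < Q a b) x y


/-- `2 log t ≤ t - 1/t` for `t ≥ 1`. -/
lemma aux_two_log_le (t : ℝ) (ht : 1 ≤ t) : 2 * Real.log t ≤ t - t⁻¹ := by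
  have h0 : (0:ℝ) < t := lt_of_lt_of_le one_pos ht
  have h := Real.sinh_log h0
  have hlog : 0 ≤ Real.log t := Real.log_nonneg ht
  rcases eq_or_lt_of_le hlog with h1 | h1
  · rw [← h1] at h ⊢
    rw [Real.sinh_zero] at h
    linarith
  · have := (Real.self_lt_sinh_iff).2 h1
    rw [h] at this
    linarith

/-- `2 (s - 1) ≤ (s + 1) log s` for `s ≥ 1`. -/
lemma aux_psi (s : ℝ) (hs : 1 ≤ s) : 2 * (s - 1) ≤ (s + 1) * Real.log s := by
  set ψ : ℝ → ℝ := fun x => (x + 1) * Real.log x - 2 * (x - 1) with hψ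
  have hderiv : ∀ x : ℝ, 0 < x → HasDerivAt ψ (Real.log x + x⁻¹ - 1) x := by
    intro x hx
    have h1 : HasDerivAt (fun y : ℝ => (y + 1) * Real.log y)
        (1 * Real.log x + (x + 1) * x⁻¹) x :=
      ((hasDerivAt_id x).add_const 1).mul (Real.hasDerivAt_log (ne_of_gt hx))
    have h2 : HasDerivAt (fun y : ℝ => 2 * (y - 1)) 2 x := by
      simpa using (((hasDerivAt_id x).sub_const 1).const_mul 2)
    have := h1.sub h2
    exact this.congr_deriv (by rw [add_mul, mul_inv_cancel₀ hx.ne']; ring)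
  have hmono : MonotoneOn ψ (Set.Ici 1) := by
    apply monotoneOn_of_deriv_nonneg (convex_Ici 1)
    · intro x hx
      exact (hderiv x (lt_of_lt_of_le one_pos hx)).continuousAt.continuousWithinAt
    · intro x hx
      rw [interior_Ici] at hx
      exact (hderiv x (lt_trans one_pos hx)).differentiableAt.differentiableWithinAt
    · intro x hx
      rw [interior_Ici] at hx
      rw [(hderiv x (lt_trans one_pos hx)).deriv]
      have hlog : 1 - x⁻¹ ≤ Real.log x := by
        have := Real.log_le_sub_one_of_pos (x := x⁻¹) (inv_pos.2 (lt_trans one_pos hx))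
        rw [Real.log_inv] at this
        linarith
      linarith
  have := hmono (Set.mem_Ici.2 le_rfl) (Set.mem_Ici.2 hs) hs
  simp only [hψ, Real.log_one] at this
  linarith [this]

/-- `G t = (t+1)(2 log t)/(t-1)` is monotone for `t > 1`. -/
lemma aux_G_mono {a b : ℝ} (ha : 1 < a) (hab : a ≤ b) :
    (a + 1) * (2 * Real.log a) / (a - 1) ≤ (b + 1) * (2 * Real.log b) / (b - 1) := by
  set G : ℝ → ℝ := fun t => (t + 1) * (2 * Real.log t) / (t - 1) with hG
  have hderiv : ∀ t : ℝ, 1 < t → HasDerivAt G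
      (((2 * Real.log t + (t + 1) * (2 * t⁻¹)) * (t - 1) - (t + 1) * (2 * Real.log t) * 1)
        / (t - 1) ^ 2) t := by
    intro t ht
    have ht0 : (0:ℝ) < t := lt_trans one_pos ht
    have h1 : HasDerivAt (fun y : ℝ => (y + 1) * (2 * Real.log y))
        (1 * (2 * Real.log t) + (t + 1) * (2 * t⁻¹)) t :=
      ((hasDerivAt_id t).add_const 1).mul
        ((Real.hasDerivAt_log (ne_of_gt ht0)).const_mul 2)
    have h2 : HasDerivAt (fun y : ℝ => y - 1) 1 t := (hasDerivAt_id t).sub_const 1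
    have := h1.div h2 (by intro h; linarith [sub_eq_zero.mp h] : t - 1 ≠ 0)
    exact this.congr_deriv (by ring)
  have hmono : MonotoneOn G (Set.Ici a) := by
    apply monotoneOn_of_deriv_nonneg (convex_Ici a)
    · intro x hx
      exact (hderiv x (lt_of_lt_of_le ha hx)).continuousAt.continuousWithinAt
    · intro x hx
      rw [interior_Ici] at hx
      exact (hderiv x (lt_trans ha hx)).differentiableAt.differentiableWithinAt
    · intro x hx
      rw [interior_Ici] at hx
      have hx1 : 1 < x := lt_trans ha hx
      have hx0 : (0:ℝ) < x := lt_trans one_pos hx1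
      rw [(hderiv x hx1).deriv]
      have key := aux_two_log_le x (le_of_lt hx1)
      have hxinv : x * x⁻¹ = 1 := mul_inv_cancel₀ (ne_of_gt hx0)
      have hnum : 0 ≤ (2 * Real.log x + (x + 1) * (2 * x⁻¹)) * (x - 1)
          - (x + 1) * (2 * Real.log x) * 1 := by nlinarith [key, hx1, hx0]
      positivity
  exact hmono (Set.mem_Ici.2 le_rfl) (Set.mem_Ici.2 hab) hab

/-- For `w > 1`, `Hfun w` in terms of `√w`. -/
lemma aux_Hfun_eq {w : ℝ} (hw : 1 < w) :
    Hfun w = (Real.sqrt w + 1) * (2 * Real.log (Real.sqrt w)) / (Real.sqrt w - 1) := by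
  rw [Hfun, if_neg (by linarith : w ≠ 1)]
  rw [Real.log_sqrt (by linarith : (0:ℝ) ≤ w)]
  ring

/-- `4 ≤ Hfun w` for `w ≥ 1`. -/
lemma aux_four_le_Hfun {w : ℝ} (hw : 1 ≤ w) : 4 ≤ Hfun w := by
  rcases eq_or_lt_of_le hw with h1 | h1
  · rw [← h1, Hfun, if_pos rfl]
  · rw [aux_Hfun_eq h1]
    have hs1 : 1 < Real.sqrt w := by
      rw [show (1:ℝ) = Real.sqrt 1 by simp]
      exact Real.sqrt_lt_sqrt (by norm_num) h1
    set s := Real.sqrt w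
    have hpsi := aux_psi s (le_of_lt hs1)
    rw [le_div_iff₀ (by linarith : (0:ℝ) < s - 1)]
    nlinarith [hpsi]

lemma aux_Hfun_mono : MonotoneOn Hfun (Set.Ici (1 : ℝ)) := by
  intro a ha b hb hab
  rcases eq_or_lt_of_le hab with rfl | hlt
  · exact le_refl _
  rcases eq_or_lt_of_le (Set.mem_Ici.mp ha) with h1 | h1
  · rw [← h1, Hfun, if_pos rfl]
    exact aux_four_le_Hfun (by rw [← h1] at hlt; exact le_of_lt hlt)
  · have hb1 : 1 < b := lt_trans h1 hlt
    rw [aux_Hfun_eq h1, aux_Hfun_eq hb1]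
    have hsa : 1 < Real.sqrt a := by
      rw [show (1:ℝ) = Real.sqrt 1 by simp]
      exact Real.sqrt_lt_sqrt (by norm_num) h1
    exact aux_G_mono hsa (Real.sqrt_le_sqrt hab)

lemma aux_Hfun_symm (u : ℝ) (hu : 0 < u) : Hfun u = Hfun u⁻¹ := by
  by_cases h1 : u = 1
  · rw [h1]; norm_num
  · have hinv1 : u⁻¹ ≠ 1 := fun h => h1 (by rw [← inv_inv u, h, inv_one])
    rw [Hfun, Hfun, if_neg h1, if_neg hinv1, Real.sqrt_inv, Real.log_inv]
    set s := Real.sqrt u with hs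
    have hs0 : 0 < s := Real.sqrt_pos.2 hu
    have hs1 : s ≠ 1 := fun h => h1 (Real.sqrt_eq_one.mp h)
    have hsm : s - 1 ≠ 0 := fun h => hs1 (by linarith [sub_eq_zero.mp h])
    have hsm' : s⁻¹ - 1 ≠ 0 := by
      intro h
      have : s⁻¹ = 1 := by linarith [sub_eq_zero.mp h]
      exact hs1 (by rw [← inv_inv s, this, inv_one])
    have key : (s⁻¹ + 1) / (s⁻¹ - 1) = -((s + 1) / (s - 1)) := by
      rw [← neg_div, div_eq_div_iff hsm' hsm]
      field_simp
      ring
    rw [key]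
    ring

theorem Hfun_symm_and_monotone :
    (∀ u : ℝ, 0 < u → Hfun u = Hfun u⁻¹) ∧
    MonotoneOn Hfun (Set.Ici (1 : ℝ)) ∧
    (∀ r : ℝ, 1 ≤ r → ∀ u ∈ Set.Icc (1 / r) r, Hfun u ≤ Hfun r) := by
  refine ⟨aux_Hfun_symm, aux_Hfun_mono, ?_⟩
  intro r hr u hu
  obtain ⟨hu1, hu2⟩ := hu
  have hr0 : (0:ℝ) < r := lt_of_lt_of_le one_pos hr
  have hu0 : (0:ℝ) < u := lt_of_lt_of_le (by positivity) hu1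
  rcases le_or_gt 1 u with h | h
  · exact aux_Hfun_mono (Set.mem_Ici.2 h) (Set.mem_Ici.2 hr) hu2
  · rw [aux_Hfun_symm u hu0]
    have h1 : 1 ≤ u⁻¹ := one_le_inv_iff₀.2 ⟨hu0, le_of_lt h⟩
    have h2 : u⁻¹ ≤ r := by
      rw [inv_le_comm₀ hu0 hr0]
      rw [one_div] at hu1
      exact hu1
    exact aux_Hfun_mono (Set.mem_Ici.2 h1) (Set.mem_Ici.2 hr) h2

end
end

section
/- For any two edges e, e' ∈ E, the edge weights c(x,y) := π(x)Q(x,y) satisfy c(e) ≤ p^{−d(e,e')}·c(e'); moreover the maximum degree Δ of the graph (X,E) satisfies Δ ≤ 1/p. -/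
open Finset

noncomputable section

variable {X : Type*} [Fintype X] [DecidableEq X] [Nonempty X]

set_option linter.unusedSectionVars false
set_option maxHeartbeats 800000

lemma aux_jumpRate_nonneg (Q : X → X → ℝ) (hQ : ∀ x y : X, x ≠ y → 0 ≤ Q x y) (x : X) :
    0 ≤ jumpRate Q x :=
  Finset.sum_nonneg fun y hy => hQ x y (Ne.symm (Finset.ne_of_mem_erase hy))

lemma aux_Q_le_jumpRate (Q : X → X → ℝ) (hQ : ∀ x y : X, x ≠ y → 0 ≤ Q x y)
    {x y : X} (hxy : x ≠ y) : Q x y ≤ jumpRate Q x :=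
  Finset.single_le_sum (fun z hz => hQ x z (Ne.symm (Finset.ne_of_mem_erase hz)))
    (Finset.mem_erase.2 ⟨hxy.symm, Finset.mem_univ y⟩)

lemma aux_Qsymm_pos (π : X → ℝ) (Q : X → X → ℝ) (hπpos : ∀ x : X, 0 < π x)
    (hrev : ∀ x y : X, π x * Q x y = π y * Q y x) {x y : X} (h : 0 < Q x y) :
    0 < Q y x := by
  have h1 := hrev x y
  nlinarith [hπpos x, hπpos y]

lemma aux_adj_pos (π : X → ℝ) (Q : X → X → ℝ) (hπpos : ∀ x : X, 0 < π x)
    (hrev : ∀ x y : X, π x * Q x y = π y * Q y x) {x y : X}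
    (h : (chainGraph Q).Adj x y) : 0 < Q x y := by
  rcases h.2 with h' | h'
  · exact h'
  · exact aux_Qsymm_pos π Q hπpos hrev h'

lemma aux_sparsity_le (Q : X → X → ℝ) (hQ : ∀ x y : X, x ≠ y → 0 ≤ Q x y)
    {x y : X} (hne : x ≠ y) (hpos : 0 < Q x y) :
    sparsity Q ≤ Q x y / max (jumpRate Q x) (Q y x) := by
  apply csInf_le
  · refine ⟨0, ?_⟩
    rintro s ⟨a, b, hab, hQab, rfl⟩
    have h1 : 0 ≤ jumpRate Q a := aux_jumpRate_nonneg Q hQ a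
    exact div_nonneg hQab.le (le_trans h1 (le_max_left _ _))
  · exact ⟨x, y, hne, hpos, rfl⟩

lemma aux_sparsity_pos_le_one (π : X → ℝ) (Q : X → X → ℝ)
    (hQ : ∀ x y : X, x ≠ y → 0 ≤ Q x y) (hπpos : ∀ x : X, 0 < π x)
    (hrev : ∀ x y : X, π x * Q x y = π y * Q y x)
    (hedge : ∃ x y : X, x ≠ y ∧ 0 < Q x y) :
    0 < sparsity Q ∧ sparsity Q ≤ 1 := by
  set S := {s : ℝ | ∃ x y : X, x ≠ y ∧ 0 < Q x y ∧
    s = Q x y / max (jumpRate Q x) (Q y x)} with hS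
  have hfin : S.Finite := by
    apply (Set.finite_range (fun e : X × X =>
      Q e.1 e.2 / max (jumpRate Q e.1) (Q e.2 e.1))).subset
    rintro s ⟨x, y, _, _, rfl⟩
    exact ⟨(x, y), rfl⟩
  have hne : S.Nonempty := by
    obtain ⟨x, y, hxy, hpos⟩ := hedge
    exact ⟨_, x, y, hxy, hpos, rfl⟩
  have hmem : sInf S ∈ S := hne.csInf_mem hfin
  obtain ⟨x, y, hxy, hpos, heq⟩ := hmem
  have hyx : 0 < Q y x := aux_Qsymm_pos π Q hπpos hrev hpos
  have hmax : 0 < max (jumpRate Q x) (Q y x) := lt_max_of_lt_right hyx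
  constructor
  · rw [show sparsity Q = sInf S from rfl, heq]
    exact div_pos hpos hmax
  · rw [show sparsity Q = sInf S from rfl, heq, div_le_one hmax]
    exact le_trans (aux_Q_le_jumpRate Q hQ hxy) (le_max_left _ _)

lemma aux_step (π : X → ℝ) (Q : X → X → ℝ)
    (hQ : ∀ x y : X, x ≠ y → 0 ≤ Q x y) (hπpos : ∀ x : X, 0 < π x)
    (hrev : ∀ x y : X, π x * Q x y = π y * Q y x) {a b c : X}
    (hab : (chainGraph Q).Adj a b) (hbc : (chainGraph Q).Adj b c)
    (hp : 0 < sparsity Q) :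
    π a * Q a b ≤ (sparsity Q)⁻¹ * (π b * Q b c) := by
  have hQab : 0 < Q a b := aux_adj_pos π Q hπpos hrev hab
  have hQbc : 0 < Q b c := aux_adj_pos π Q hπpos hrev hbc
  have hQcb : 0 < Q c b := aux_Qsymm_pos π Q hπpos hrev hQbc
  have hmax : 0 < max (jumpRate Q b) (Q c b) := lt_max_of_lt_right hQcb
  have h1 : sparsity Q ≤ Q b c / max (jumpRate Q b) (Q c b) :=
    aux_sparsity_le Q hQ hbc.1 hQbc
  have h2 : sparsity Q * max (jumpRate Q b) (Q c b) ≤ Q b c := (le_div_iff₀ hmax).1 h1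
  have h3 : Q b a ≤ jumpRate Q b := aux_Q_le_jumpRate Q hQ hab.1.symm
  have h4 : jumpRate Q b ≤ max (jumpRate Q b) (Q c b) := le_max_left _ _
  have h5 : sparsity Q * Q b a ≤ Q b c :=
    le_trans (mul_le_mul_of_nonneg_left (h3.trans h4) hp.le) h2
  have hπb : (0:ℝ) ≤ π b := (hπpos b).le
  have h6 : π a * Q a b = π b * Q b a := hrev a b
  rw [h6, inv_mul_eq_div, le_div_iff₀ hp]
  nlinarith [mul_le_mul_of_nonneg_left h5 hπb]

lemma aux_path (π : X → ℝ) (Q : X → X → ℝ)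
    (hQ : ∀ x y : X, x ≠ y → 0 ≤ Q x y) (hπpos : ∀ x : X, 0 < π x)
    (hrev : ∀ x y : X, π x * Q x y = π y * Q y x) (hp : 0 < sparsity Q) :
    ∀ (n : ℕ) (c : ℕ → X), (∀ i < n + 1, (chainGraph Q).Adj (c i) (c (i + 1))) →
      π (c 0) * Q (c 0) (c 1) ≤ (sparsity Q)⁻¹ ^ n * (π (c n) * Q (c n) (c (n + 1))) := by
  intro n
  induction n with
  | zero => intro c _; simp
  | succ n ih =>
    intro c h
    have h1 := ih c (fun i hi => h i (by omega))
    have h2 := aux_step π Q hQ hπpos hrev (h n (by omega)) (h (n + 1) (by omega)) hp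
    calc π (c 0) * Q (c 0) (c 1)
        ≤ (sparsity Q)⁻¹ ^ n * (π (c n) * Q (c n) (c (n + 1))) := h1
      _ ≤ (sparsity Q)⁻¹ ^ n *
          ((sparsity Q)⁻¹ * (π (c (n + 1)) * Q (c (n + 1)) (c (n + 1 + 1)))) :=
          mul_le_mul_of_nonneg_left h2 (by positivity)
      _ = (sparsity Q)⁻¹ ^ (n + 1) * (π (c (n + 1)) * Q (c (n + 1)) (c (n + 1 + 1))) := by
          ring

lemma aux_rtg_path (Q : X → X → ℝ) {a b : X}
    (h : Relation.ReflTransGen (fun u v => u ≠ v ∧ 0 < Q u v) a b) :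
    ∃ (k : ℕ) (q : ℕ → X), q 0 = a ∧ q k = b ∧
      ∀ i < k, q i ≠ q (i + 1) ∧ 0 < Q (q i) (q (i + 1)) := by
  induction h with
  | refl => exact ⟨0, fun _ => a, rfl, rfl, fun i hi => absurd hi (Nat.not_lt_zero i)⟩
  | @tail b c _ hbc ih =>
    obtain ⟨k, q, h0, hk, hstep⟩ := ih
    refine ⟨k + 1, fun i => if i ≤ k then q i else c, ?_, ?_, ?_⟩
    · simp only [Nat.zero_le, if_pos, h0]
    · simp only [if_neg (by omega : ¬ (k + 1 ≤ k))]
    · intro i hi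
      rcases Nat.lt_or_ge i k with hik | hik
      · have e1 : (if i ≤ k then q i else c) = q i := if_pos (by omega)
        have e2 : (if i + 1 ≤ k then q (i + 1) else c) = q (i + 1) := if_pos (by omega)
        simp only [e1, e2]
        exact hstep i hik
      · have e1 : (if i ≤ k then q i else c) = b := by
          rw [if_pos (by omega : i ≤ k), show i = k by omega, hk]
        have e2 : (if i + 1 ≤ k then q (i + 1) else c) = c := if_neg (by omega)
        simp only [e1, e2]
        exact hbc

theorem edgeWeight_comparison_and_maxDegree
    (π : X → ℝ) (Q : X → X → ℝ)
    (hQ : ∀ x y : X, x ≠ y → 0 ≤ Q x y)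
    (hQsum : ∀ x : X, ∑ y : X, Q x y = 0)
    (hirr : MarkovIrreducible Q)
    (hπpos : ∀ x : X, 0 < π x)
    (hπsum : ∑ x : X, π x = 1)
    (hrev : ∀ x y : X, π x * Q x y = π y * Q y x)
 :
     (∀ e ∈ edges Q, ∀ e' ∈ edges Q,
      edgeWeight π Q e ≤ sparsity Q ^ (-(edgeDist Q e e' : ℤ)) * edgeWeight π Q e') ∧
    (maxDegree Q : ℝ) ≤ 1 / sparsity Q := by
  constructor
  · intro e he e' he'
    rw [edges, Finset.mem_filter] at he he'
    obtain ⟨-, hne, hpos⟩ := he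
    obtain ⟨-, hne', hpos'⟩ := he'
    have hedge : ∃ x y : X, x ≠ y ∧ 0 < Q x y := ⟨e.1, e.2, hne, hpos⟩
    obtain ⟨hp, hp1⟩ := aux_sparsity_pos_le_one π Q hQ hπpos hrev hedge
    obtain ⟨k, q, hq0, hqk, hqstep⟩ := aux_rtg_path Q (hirr e.2 e'.1)
    set Sd := {n : ℕ | ∃ c : ℕ → X, c 0 = e.1 ∧ c 1 = e.2 ∧ c n = e'.1 ∧ c (n + 1) = e'.2 ∧
      ∀ i < n + 1, (chainGraph Q).Adj (c i) (c (i + 1))} with hSd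
    have hSne : Sd.Nonempty := by
      refine ⟨k + 1, fun i => if i = 0 then e.1 else if i ≤ k + 1 then q (i - 1) else e'.2,
        ?_, ?_, ?_, ?_, ?_⟩
      · simp
      · simp only [if_neg (by omega : ¬ (1:ℕ) = 0), if_pos (by omega : (1:ℕ) ≤ k + 1)]
        simpa using hq0
      · simp only [if_neg (by omega : ¬ k + 1 = 0), if_pos (le_refl (k + 1))]
        simpa using hqk
      · simp only [if_neg (by omega : ¬ k + 1 + 1 = 0), if_neg (by omega : ¬ k + 1 + 1 ≤ k + 1)]
      · intro i hi
        rcases Nat.eq_zero_or_pos i with h0 | hpos_i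
        · subst h0
          simp only [if_pos rfl, if_neg (by omega : ¬ (0:ℕ) + 1 = 0),
            if_pos (by omega : (0:ℕ) + 1 ≤ k + 1)]
          have : q (0 + 1 - 1) = e.2 := by simpa using hq0
          rw [this]
          exact ⟨hne, Or.inl hpos⟩
        · rcases Nat.lt_or_ge i (k + 1) with hik | hik
          · have e1 : (if i = 0 then e.1 else if i ≤ k + 1 then q (i - 1) else e'.2)
                = q (i - 1) := by
              rw [if_neg (by omega), if_pos (by omega)]
            have e2 : (if i + 1 = 0 then e.1 else if i + 1 ≤ k + 1 then q (i + 1 - 1) else e'.2)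
                = q i := by
              rw [if_neg (by omega), if_pos (by omega)]
              exact congrArg q (by omega)
            simp only [e1, e2]
            have hs := hqstep (i - 1) (by omega)
            have hq : q (i - 1 + 1) = q i := by congr 1; omega
            rw [hq] at hs
            exact ⟨hs.1, Or.inl hs.2⟩
          · have hik' : i = k + 1 := by omega
            subst hik'
            have e1 : (if k + 1 = 0 then e.1 else if k + 1 ≤ k + 1 then q (k + 1 - 1) else e'.2)
                = e'.1 := by
              rw [if_neg (by omega), if_pos (le_refl _)]
              simpa using hqk
            have e2 : (if k + 1 + 1 = 0 then e.1
                else if k + 1 + 1 ≤ k + 1 then q (k + 1 + 1 - 1) else e'.2) = e'.2 := by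
              rw [if_neg (by omega), if_neg (by omega)]
            simp only [e1, e2]
            exact ⟨hne', Or.inl hpos'⟩
    have hd : edgeDist Q e e' ∈ Sd := by
      rw [show edgeDist Q e e' = sInf Sd from rfl]
      exact Nat.sInf_mem hSne
    obtain ⟨c, hc0, hc1, hcn, hcn1, hadj⟩ := hd
    have hb := aux_path π Q hQ hπpos hrev hp (edgeDist Q e e') c hadj
    rw [hc0, hc1, hcn, hcn1] at hb
    have hz : sparsity Q ^ (-(edgeDist Q e e' : ℤ)) = (sparsity Q)⁻¹ ^ (edgeDist Q e e') := by
      rw [zpow_neg, zpow_natCast, inv_pow]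
    rw [show edgeWeight π Q e = π e.1 * Q e.1 e.2 from rfl,
      show edgeWeight π Q e' = π e'.1 * Q e'.1 e'.2 from rfl, hz]
    exact hb
  · by_cases hE : ∃ x y : X, x ≠ y ∧ 0 < Q x y
    · obtain ⟨hp, hp1⟩ := aux_sparsity_pos_le_one π Q hQ hπpos hrev hE
      obtain ⟨x, -, hx⟩ := Finset.exists_mem_eq_sup univ univ_nonempty
        (fun x : X => Nat.card {y : X // (chainGraph Q).Adj x y})
      rw [maxDegree, hx]
      classical
      have hcard : Nat.card {y : X // (chainGraph Q).Adj x y}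
          = (univ.filter fun y => (chainGraph Q).Adj x y).card := by
        rw [Nat.card_eq_fintype_card]
        convert Fintype.card_subtype _
      rw [hcard]
      set N := univ.filter fun y => (chainGraph Q).Adj x y with hN
      rcases eq_or_ne N.card 0 with h0 | h0
      · rw [h0]
        simpa using (div_pos one_pos hp).le
      · have hNne : N.Nonempty := Finset.card_pos.1 (Nat.pos_of_ne_zero h0)
        have key : ∀ y ∈ N, sparsity Q * jumpRate Q x ≤ Q x y := by
          intro y hy
          rw [hN, Finset.mem_filter] at hy
          have hadj := hy.2
          have hpos : 0 < Q x y := aux_adj_pos π Q hπpos hrev hadj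
          have hyx : 0 < Q y x := aux_Qsymm_pos π Q hπpos hrev hpos
          have hmax : 0 < max (jumpRate Q x) (Q y x) := lt_max_of_lt_right hyx
          have h1 := aux_sparsity_le Q hQ hadj.1 hpos
          have h2 : sparsity Q * max (jumpRate Q x) (Q y x) ≤ Q x y := (le_div_iff₀ hmax).1 h1
          exact le_trans (mul_le_mul_of_nonneg_left (le_max_left _ _) hp.le) h2
        have hsum : N.card • (sparsity Q * jumpRate Q x) ≤ ∑ y ∈ N, Q x y :=
          Finset.card_nsmul_le_sum N _ _ key
        have hsub : N ⊆ univ.erase x := by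
          intro y hy
          rw [hN, Finset.mem_filter] at hy
          exact Finset.mem_erase.2 ⟨(hy.2.1).symm, Finset.mem_univ y⟩
        have hsum2 : ∑ y ∈ N, Q x y ≤ jumpRate Q x :=
          Finset.sum_le_sum_of_subset_of_nonneg hsub
            (fun y hy _ => hQ x y (Ne.symm (Finset.ne_of_mem_erase hy)))
        obtain ⟨y0, hy0⟩ := hNne
        have hy0' := hy0
        rw [hN, Finset.mem_filter] at hy0'
        have hQxy0 : 0 < Q x y0 := aux_adj_pos π Q hπpos hrev hy0'.2
        have hj : 0 < jumpRate Q x :=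
          lt_of_lt_of_le hQxy0 (aux_Q_le_jumpRate Q hQ hy0'.2.1)
        have hfinal : (N.card : ℝ) * sparsity Q ≤ 1 := by
          have h7 := hsum.trans hsum2
          rw [nsmul_eq_mul] at h7
          nlinarith
        rw [le_div_iff₀ hp]
        exact hfinal
    · have hmd : maxDegree Q = 0 := by
        rw [maxDegree]
        apply Nat.le_antisymm _ (Nat.zero_le _)
        apply Finset.sup_le
        intro x _
        have hEmp : IsEmpty {y : X // (chainGraph Q).Adj x y} := by
          constructor
          rintro ⟨y, hadj⟩
          obtain ⟨hne, hor⟩ := hadj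
          rcases hor with h | h
          · exact hE ⟨x, y, hne, h⟩
          · exact hE ⟨y, x, hne.symm, h⟩
        simp [Nat.card_of_isEmpty]
      have hs : sparsity Q = 0 := by
        rw [sparsity]
        convert Real.sInf_empty
        rw [Set.eq_empty_iff_forall_notMem]
        rintro s ⟨x, y, hne, hpos, -⟩
        exact hE ⟨x, y, hne, hpos⟩
      rw [hmd, hs]
      norm_num


end
end
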